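/- Fix positive integers b, c. In the rank 2 quantum cluster algebra, for every nonnegative integer n the cluster variable X_4 satisfies X_4^n = \sum_{p=0}^{n} \sum_{l=0}^{bp} [n choose p]_{v^b} [bp choose l]_{v^c} X^{(-bp, -n + cl)}, where X^{(a_1,a_2)} = v^{a_1 a_2} X_1^{a_1} X_2^{a_2} denotes the normalized monomial. -/

import Mathlib

open Finset

noncomputable section

/-- Field of rational functions over ℚ, containing `ℤ[w^{±1}]`. -/
abbrev KK : Type := RatFunc ℚ

/-- The indeterminate `w`. -/
def wvar : KK := RatFunc.X

/-- The bar-invariant quantum integer `[n]_u = (u^n - u^{-n})/(u - u⁻¹)`. -/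
def qint (u : KK) (n : ℤ) : KK := (u ^ n - u ^ (-n)) / (u - u⁻¹)

/-- The bar-invariant quantum binomial coefficient. -/
def qbinom (u : KK) (n : ℤ) (k : ℕ) : KK :=
  (∏ i ∈ Finset.range k, qint u (n - i)) / (∏ i ∈ Finset.range k, qint u ((i : ℤ) + 1))
/-- The normalized (bar-invariant) quantum torus monomial `X^{(a,b)} = v^{ab} X_1^a X_2^b`. -/
def Xmono {F : Type*} [DivisionRing F] [Algebra KK F] (X1 X2 : F) (a b : ℤ) : F :=
  algebraMap KK F (wvar ^ (a * b)) * (X1 ^ a * X2 ^ b)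

lemma wvar_ne_zero : (wvar : KK) ≠ 0 := RatFunc.X_ne_zero

lemma wpow_nat_ne_one {m : ℕ} (hm : m ≠ 0) : (wvar : KK) ^ m ≠ 1 := by
  intro h
  have hx : (algebraMap (Polynomial ℚ) (RatFunc ℚ)) (Polynomial.X ^ m) = algebraMap _ _ 1 := by
    simpa [wvar, map_pow] using h
  have := RatFunc.algebraMap_injective ℚ hx
  have hdeg := congrArg Polynomial.natDegree this
  simp [Polynomial.natDegree_X_pow] at hdeg
  exact hm hdeg

lemma wzpow_ne_one {m : ℤ} (hm : m ≠ 0) : (wvar : KK) ^ m ≠ 1 := by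
  rcases m with n | n
  · intro h
    exact wpow_nat_ne_one (fun h0 : n = 0 => hm (by rw [h0]; rfl)) (by simpa using h)
  · intro h
    have h2 : ((wvar : KK) ^ (n+1))⁻¹ = 1 := by simpa [zpow_negSucc] using h
    exact wpow_nat_ne_one (Nat.succ_ne_zero n) (by rwa [inv_eq_one] at h2)

lemma wzsub_ne_zero {a : ℤ} (ha : a ≠ 0) : (wvar : KK) ^ a - wvar ^ (-a) ≠ 0 := by
  rw [sub_ne_zero]
  intro h
  have h1 : (1:KK) = wvar ^ (-(2*a)) := by
    calc (1:KK) = wvar ^ (a + -a) := by simp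
    _ = wvar^a * wvar^(-a) := zpow_add₀ wvar_ne_zero _ _
    _ = wvar^(-a) * wvar^(-a) := by rw [h]
    _ = wvar ^ (-a + -a) := (zpow_add₀ wvar_ne_zero _ _).symm
    _ = wvar ^ (-(2*a)) := by ring_nf
  exact wzpow_ne_one (by omega) h1.symm

lemma qint_w_ne_zero {d : ℕ} (hd : d ≠ 0) {k : ℤ} (hk : k ≠ 0) :
    qint ((wvar : KK) ^ d) k ≠ 0 := by
  rw [qint]
  apply div_ne_zero
  · have e : ((wvar:KK)^d)^k - ((wvar:KK)^d)^(-k) = wvar^((d:ℤ)*k) - wvar^(-((d:ℤ)*k)) := by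
      rw [← zpow_natCast (wvar:KK) d, ← zpow_mul, ← zpow_mul, neg_mul_eq_mul_neg]
    rw [e]
    exact wzsub_ne_zero (mul_ne_zero (by exact_mod_cast hd) hk)
  · have e : ((wvar:KK)^d) - ((wvar:KK)^d)⁻¹ = wvar^((d:ℤ)) - wvar^(-(d:ℤ)) := by
      rw [← zpow_natCast (wvar:KK) d, zpow_neg]
    rw [e]
    exact wzsub_ne_zero (by exact_mod_cast hd)

lemma wsub_ne_zero {d : ℕ} (hd : d ≠ 0) : ((wvar:KK) ^ d) - ((wvar:KK) ^ d)⁻¹ ≠ 0 := by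
  have e : ((wvar:KK)^d) - ((wvar:KK)^d)⁻¹ = wvar^((d:ℤ)) - wvar^(-(d:ℤ)) := by
    rw [← zpow_natCast (wvar:KK) d, zpow_neg]
  rw [e]
  exact wzsub_ne_zero (by exact_mod_cast hd)

lemma qint_zero (u : KK) : qint u 0 = 0 := by simp [qint]

lemma qint_split (u : KK) (hu : u ≠ 0) (m k : ℤ) :
    qint u m = u^k * qint u (m - k) + u^(k - m) * qint u k := by
  rw [qint, qint, qint, ← mul_div_assoc, ← mul_div_assoc, ← add_div]
  congr 1
  have hz : ∀ a b : ℤ, u^a * u^b = u^(a+b) := fun a b => (zpow_add₀ hu a b).symm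
  rw [mul_sub, mul_sub, hz, hz, hz, hz]
  have e1 : k + (m - k) = m := by ring
  have e2 : k + -(m-k) = 2*k - m := by ring
  have e3 : k - m + k = 2*k - m := by ring
  have e4 : k - m + -k = -m := by ring
  rw [e1, e2, e3, e4]
  ring

lemma qbinom_zero (u : KK) (n : ℤ) : qbinom u n 0 = 1 := by simp [qbinom]

lemma qbinom_overflow (u : KK) (n : ℕ) : qbinom u n (n+1) = 0 := by
  rw [qbinom, Finset.prod_eq_zero (Finset.self_mem_range_succ n), zero_div]
  show qint u ((n:ℤ) - n) = 0
  simp [qint]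

lemma qbinom_pascal {d : ℕ} (hd : d ≠ 0) (n p : ℕ) :
    qbinom ((wvar:KK)^d) (↑(n+1)) (p+1)
      = ((wvar:KK)^d)^((p:ℤ)+1) * qbinom ((wvar:KK)^d) n (p+1)
        + ((wvar:KK)^d)^((p:ℤ)-n) * qbinom ((wvar:KK)^d) n p := by
  set u : KK := (wvar:KK)^d with hu_def
  have hu : u ≠ 0 := pow_ne_zero _ wvar_ne_zero
  have hq : ∀ k : ℤ, k ≠ 0 → qint u k ≠ 0 := fun k hk => qint_w_ne_zero hd hk
  have hD : ∀ k : ℕ, (∏ i ∈ Finset.range k, qint u ((i:ℤ)+1)) ≠ 0 := by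
    intro k
    exact Finset.prod_ne_zero_iff.mpr (fun i _ => hq _ (by positivity))
  rw [qbinom, qbinom, qbinom]
  have hnum : (∏ i ∈ Finset.range (p+1), qint u ((↑(n+1):ℤ) - (i:ℕ)))
      = (∏ i ∈ Finset.range p, qint u ((n:ℤ) - (i:ℕ))) * qint u ((n:ℤ)+1) := by
    rw [Finset.prod_range_succ']
    congr 1
    apply Finset.prod_congr rfl
    intro i _
    congr 1
    push_cast
    ring
  rw [hnum]
  rw [Finset.prod_range_succ (fun i => qint u ((n:ℤ) - (i:ℕ))) p]
  rw [Finset.prod_range_succ (fun i => qint u ((i:ℤ)+1)) p]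
  have hkey : qint u ((n:ℤ)+1)
      = u^((p:ℤ)+1) * qint u ((n:ℤ) - p) + u^((p:ℤ)-n) * qint u ((p:ℤ)+1) := by
    have := qint_split u hu ((n:ℤ)+1) ((p:ℤ)+1)
    have e1 : (n:ℤ)+1 - ((p:ℤ)+1) = (n:ℤ) - p := by ring
    have e2 : (p:ℤ)+1 - ((n:ℤ)+1) = (p:ℤ) - n := by ring
    rwa [e1, e2] at this
  rw [hkey]
  have hDp := hD p
  have hp1 : qint u ((p:ℤ)+1) ≠ 0 := hq _ (by positivity)
  field_simp

section Helpers

variable {F : Type*} [DivisionRing F] [Algebra KK F]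

lemma comm_pow (t : KK) (x y : F) (h : y * x = t • (x * y)) :
    ∀ m : ℕ, y * x ^ m = t ^ m • (x ^ m * y)
  | 0 => by simp
  | m+1 => by
    calc y * x ^ (m+1) = (y * x ^ m) * x := by rw [pow_succ, mul_assoc]
    _ = t ^ m • ((x ^ m * y) * x) := by rw [comm_pow t x y h m, smul_mul_assoc]
    _ = t ^ m • (x ^ m * (t • (x * y))) := by rw [mul_assoc, h]
    _ = (t ^ m * t) • (x ^ m * x * (y)) := by
        rw [mul_smul_comm, smul_smul, mul_assoc]
    _ = t ^ (m+1) • (x ^ (m+1) * y) := by rw [pow_succ, pow_succ]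

lemma comm_pow_pow (t : KK) (x y : F) (h : y * x = t • (x * y)) :
    ∀ (k m : ℕ), y ^ k * x ^ m = t ^ (m * k) • (x ^ m * y ^ k)
  | 0, m => by simp
  | k+1, m => by
    calc y ^ (k+1) * x ^ m = y ^ k * (y * x ^ m) := by rw [pow_succ, mul_assoc]
    _ = y ^ k * (t ^ m • (x ^ m * y)) := by rw [comm_pow t x y h m]
    _ = t ^ m • ((y ^ k * x ^ m) * y) := by rw [mul_smul_comm, mul_assoc]
    _ = t ^ m • ((t ^ (m * k) • (x ^ m * y ^ k)) * y) := by rw [comm_pow_pow t x y h k m]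
    _ = (t ^ m * t ^ (m * k)) • (x ^ m * (y ^ k * y)) := by
        rw [smul_mul_assoc, smul_smul, mul_assoc]
    _ = t ^ (m * (k+1)) • (x ^ m * y ^ (k+1)) := by
        rw [← pow_add, pow_succ]
        congr 2
        ring

lemma inv_comm (t : KK) (ht : t ≠ 0) (x y : F) (hy : y ≠ 0)
    (h : y * x = t • (x * y)) : y⁻¹ * x = t⁻¹ • (x * y⁻¹) := by
  have hxy : x * y = t⁻¹ • (y * x) := by
    rw [h, smul_smul, inv_mul_cancel₀ ht, one_smul]
  calc y⁻¹ * x = y⁻¹ * (x * (y * y⁻¹)) := by rw [mul_inv_cancel₀ hy, mul_one]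
  _ = y⁻¹ * ((x * y) * y⁻¹) := by rw [mul_assoc]
  _ = y⁻¹ * ((t⁻¹ • (y * x)) * y⁻¹) := by rw [hxy]
  _ = t⁻¹ • ((y⁻¹ * y) * (x * y⁻¹)) := by
      rw [smul_mul_assoc, mul_smul_comm]
      congr 1
      rw [mul_assoc, mul_assoc]
  _ = t⁻¹ • (x * y⁻¹) := by rw [inv_mul_cancel₀ hy, one_mul]

end Helpers

lemma expand {F : Type*} [DivisionRing F] [Algebra KK F] {d : ℕ} (hd : d ≠ 0)
    (P Q : F) (hPQ : Q * P = (((wvar:KK)^d)^(2:ℕ)) • (P * Q)) (n : ℕ) :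
    ((P + 1) * Q) ^ n = ∑ p ∈ Finset.range (n+1),
      ((((wvar:KK)^d)^((p:ℤ)*((n:ℤ)-1)) * qbinom ((wvar:KK)^d) n p) • (P^p * Q^n)) := by
  set u : KK := (wvar:KK)^d with hu_def
  have hu : u ≠ 0 := pow_ne_zero _ wvar_ne_zero
  have hcomb : ∀ (a b : ℤ) (q : KK), u^a * (u^b * q) = u^(a+b) * q := by
    intro a b q
    rw [← mul_assoc, ← zpow_add₀ hu]
  have hmulp : ∀ (a : ℤ) (q : KK) (pp : ℕ), (u^a * q) * (u^(2:ℕ))^pp = u^(a+2*pp) * q := by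
    intro a q pp
    rw [mul_right_comm]
    congr 1
    rw [← pow_mul, ← zpow_natCast u (2*pp), ← zpow_add₀ hu]
    norm_cast
  induction n with
  | zero => simp [qbinom_zero]
  | succ n ih =>
    have hQP : ∀ p : ℕ, Q * P^p = (u^(2:ℕ))^p • (P^p * Q) := fun p => comm_pow _ _ _ hPQ p
    set A : ℕ → F := fun p =>
      (u^((p:ℤ)*((n:ℤ)-1)+2*p) * qbinom u (n:ℤ) p) • (P^(p+1) * Q^(n+1)) with hA
    set B : ℕ → F := fun p =>
      (u^((p:ℤ)*((n:ℤ)-1)+2*p) * qbinom u (n:ℤ) p) • (P^p * Q^(n+1)) with hB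
    have lhs_eq : ((P + 1) * Q) ^ (n+1)
        = ∑ p ∈ Finset.range (n+1), A p + ∑ p ∈ Finset.range (n+1), B p := by
      rw [pow_succ', ih, Finset.mul_sum, ← Finset.sum_add_distrib]
      apply Finset.sum_congr rfl
      intro p _
      simp only [hA, hB]
      have e1 : (P+1) * Q * ((u^((p:ℤ)*((n:ℤ)-1)) * qbinom u (n:ℤ) p) • (P^p * Q^n))
          = (u^((p:ℤ)*((n:ℤ)-1)) * qbinom u (n:ℤ) p) • ((P+1) * (Q * (P^p * Q^n))) := by
        rw [mul_smul_comm, mul_assoc]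
      rw [e1]
      have e2 : Q * (P^p * Q^n) = (u^(2:ℕ))^p • (P^p * Q^(n+1)) := by
        rw [← mul_assoc, hQP p, smul_mul_assoc, mul_assoc, ← pow_succ']
      rw [e2, mul_smul_comm, smul_smul, hmulp]
      have e3 : (P+1) * (P^p * Q^(n+1)) = P^(p+1) * Q^(n+1) + P^p * Q^(n+1) := by
        rw [add_mul, one_mul, ← mul_assoc, ← pow_succ']
      rw [e3, smul_add]
    rw [lhs_eq]
    have pascal : ∀ p : ℕ, qbinom u (↑(n+1)) (p+1)
        = u^((p:ℤ)+1) * qbinom u (n:ℤ) (p+1) + u^((p:ℤ)-n) * qbinom u (n:ℤ) p := by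
      intro p
      rw [hu_def]
      exact qbinom_pascal hd n p
    have key : ∀ p : ℕ,
        (u^((↑(p+1):ℤ)*((↑(n+1):ℤ)-1)) * qbinom u (↑(n+1):ℤ) (p+1)) • (P^(p+1) * Q^(n+1))
          = A p + B (p+1) := by
      intro p
      simp only [hA, hB]
      rw [pascal p, mul_add, add_smul, add_comm]
      congr 1
      · rw [hcomb]
        have e : (↑(p+1):ℤ)*((↑(n+1):ℤ)-1) + ((p:ℤ)-n) = (p:ℤ)*((n:ℤ)-1)+2*p := by
          push_cast; ring
        rw [e]
      · rw [hcomb]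
        have e : (↑(p+1):ℤ)*((↑(n+1):ℤ)-1) + ((p:ℤ)+1)
            = (↑(p+1):ℤ)*((n:ℤ)-1)+2*(↑(p+1):ℤ) := by
          push_cast; ring
        rw [e]
    have hBtop : B (n+1) = 0 := by
      simp only [hB]
      rw [qbinom_overflow u n]
      simp
    have hB0 : (u^((((0:ℕ)):ℤ)*((↑(n+1):ℤ)-1)) * qbinom u (↑(n+1):ℤ) 0) • (P^(0:ℕ) * Q^(n+1))
        = B 0 := by
      simp only [hB]
      simp [qbinom_zero]
    calc ∑ p ∈ Finset.range (n+1), A p + ∑ p ∈ Finset.range (n+1), B p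
        = ∑ p ∈ Finset.range (n+1), A p
            + (∑ p ∈ Finset.range (n+1), B p + B (n+1)) := by rw [hBtop, add_zero]
      _ = ∑ p ∈ Finset.range (n+1), A p + ∑ p ∈ Finset.range (n+1+1), B p := by
          rw [Finset.sum_range_succ B (n+1)]
      _ = ∑ p ∈ Finset.range (n+1), A p
            + (∑ p ∈ Finset.range (n+1), B (p+1) + B 0) := by
          rw [Finset.sum_range_succ' B (n+1)]
      _ = (∑ p ∈ Finset.range (n+1), (A p + B (p+1))) + B 0 := by
          rw [Finset.sum_add_distrib, add_assoc]
      _ = (∑ p ∈ Finset.range (n+1),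
            (u^((↑(p+1):ℤ)*((↑(n+1):ℤ)-1)) * qbinom u (↑(n+1):ℤ) (p+1))
              • (P^(p+1) * Q^(n+1))) + B 0 := by
          congr 1
          exact Finset.sum_congr rfl (fun p _ => (key p).symm)
      _ = ∑ p ∈ Finset.range (n+1+1),
            (u^((p:ℤ)*((↑(n+1):ℤ)-1)) * qbinom u (↑(n+1):ℤ) p) • (P^p * Q^(n+1)) := by
          rw [← hB0]
          exact (Finset.sum_range_succ' (fun p =>
            (u^((p:ℤ)*((↑(n+1):ℤ)-1)) * qbinom u (↑(n+1):ℤ) p) • (P^p * Q^(n+1))) (n+1)).symm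

lemma inv_pow_zpow {F : Type*} [DivisionRing F] (x : F) (m : ℕ) : (x⁻¹)^m = x^(-(m:ℤ)) := by
  rw [inv_pow, ← zpow_natCast x m, ← zpow_neg]

/-- Expansion of powers of `X_4`:
`X_4^n = ∑_{p=0}^n ∑_{l=0}^{bp} [n choose p]_{v^b} [bp choose l]_{v^c} X^{(-bp, -n+cl)}`. -/
theorem X4_power_expansion (b c : ℕ) (hb : 0 < b) (hc : 0 < c)
    (F : Type*) [DivisionRing F] [Algebra KK F] (X1 X2 : F)
    (h1 : X1 ≠ 0) (h2 : X2 ≠ 0)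
    (hcomm : X2 * X1 = algebraMap KK F (wvar ^ 2) * (X1 * X2)) (n : ℕ) :
    ((algebraMap KK F (wvar ^ b) *
        ((algebraMap KK F (wvar ^ c) * X2 ^ c + 1) * X1⁻¹) ^ b + 1) * X2⁻¹) ^ n =
      ∑ p ∈ Finset.range (n + 1), ∑ l ∈ Finset.range (b * p + 1),
        algebraMap KK F (qbinom (wvar ^ b) n p * qbinom (wvar ^ c) ((b : ℤ) * p) l) *
          Xmono X1 X2 (-((b : ℤ) * p)) (-(n : ℤ) + c * l) := by
  have hb' : b ≠ 0 := hb.ne'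
  have hc' : c ≠ 0 := hc.ne'
  rw [← Algebra.smul_def] at hcomm
  have hw2 : (wvar:KK)^(2:ℕ) ≠ 0 := pow_ne_zero _ wvar_ne_zero
  have R2 : X1⁻¹ * X2 = ((wvar:KK)^(2:ℕ)) • (X2 * X1⁻¹) := by
    have h' : X1 * X2 = ((wvar:KK)^(2:ℕ))⁻¹ • (X2 * X1) := by
      rw [hcomm, smul_smul, inv_mul_cancel₀ hw2, one_smul]
    have := inv_comm _ (inv_ne_zero hw2) X2 X1 h1 h'
    rwa [inv_inv] at this
  have R3 : X2 * X1⁻¹ = (((wvar:KK)^(2:ℕ))⁻¹) • (X1⁻¹ * X2) := by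
    rw [R2, smul_smul, inv_mul_cancel₀ hw2, one_smul]
  set P2 : F := algebraMap KK F ((wvar:KK)^c) * X2^c with hP2
  set X3 : F := (P2 + 1) * X1⁻¹ with hX3def
  have hP2smul : P2 = ((wvar:KK)^c) • X2^c := by rw [hP2, Algebra.smul_def]
  have hPQ2 : X1⁻¹ * P2 = (((wvar:KK)^c)^(2:ℕ)) • (P2 * X1⁻¹) := by
    rw [hP2smul, mul_smul_comm, comm_pow ((wvar:KK)^(2:ℕ)) X2 X1⁻¹ R2 c, smul_smul,
      smul_mul_assoc, smul_smul]
    congr 1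
    ring
  have hX3m : ∀ m : ℕ, X3 ^ m = ∑ l ∈ Finset.range (m+1),
      ((((wvar:KK)^c)^((l:ℤ)*((m:ℤ)-1)) * qbinom ((wvar:KK)^c) m l) • (P2^l * (X1⁻¹)^m)) :=
    fun m => by rw [hX3def]; exact expand hc' P2 X1⁻¹ hPQ2 m
  have hcomm22 : X2 * P2 = P2 * X2 := by
    rw [hP2smul, mul_smul_comm, smul_mul_assoc, ← pow_succ', ← pow_succ]
  have hX2X3 : X3 * X2 = ((wvar:KK)^(2:ℕ)) • (X2 * X3) := by
    calc X3 * X2 = (P2+1) * (X1⁻¹ * X2) := by rw [hX3def, mul_assoc]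
    _ = (P2+1) * (((wvar:KK)^(2:ℕ)) • (X2 * X1⁻¹)) := by rw [R2]
    _ = ((wvar:KK)^(2:ℕ)) • (((P2+1) * X2) * X1⁻¹) := by rw [mul_smul_comm, ← mul_assoc]
    _ = ((wvar:KK)^(2:ℕ)) • ((X2 * (P2+1)) * X1⁻¹) := by
        rw [add_mul, mul_add, hcomm22, one_mul, mul_one]
    _ = ((wvar:KK)^(2:ℕ)) • (X2 * X3) := by rw [hX3def, mul_assoc]
  have hQ1P : X2⁻¹ * X3 = ((wvar:KK)^(2:ℕ)) • (X3 * X2⁻¹) := by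
    have h' : X2 * X3 = ((wvar:KK)^(2:ℕ))⁻¹ • (X3 * X2) := by
      rw [hX2X3, smul_smul, inv_mul_cancel₀ hw2, one_smul]
    have := inv_comm _ (inv_ne_zero hw2) X3 X2 h2 h'
    rwa [inv_inv] at this
  set P1 : F := algebraMap KK F ((wvar:KK)^b) * X3^b with hP1
  have hP1smul : P1 = ((wvar:KK)^b) • X3^b := by rw [hP1, Algebra.smul_def]
  have hPQ1 : X2⁻¹ * P1 = (((wvar:KK)^b)^(2:ℕ)) • (P1 * X2⁻¹) := by
    rw [hP1smul, mul_smul_comm, comm_pow ((wvar:KK)^(2:ℕ)) X3 X2⁻¹ hQ1P b, smul_smul,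
      smul_mul_assoc, smul_smul]
    congr 1
    ring
  rw [expand hb' P1 X2⁻¹ hPQ1 n]
  apply Finset.sum_congr rfl
  intro p _
  have e1 : P1^p = ((wvar:KK)^(b*p)) • X3^(b*p) := by
    rw [hP1smul, smul_pow, ← pow_mul, ← pow_mul]
  rw [e1, hX3m (b*p), smul_mul_assoc, Finset.sum_mul, smul_smul, Finset.smul_sum]
  apply Finset.sum_congr rfl
  intro l _
  rw [smul_mul_assoc, smul_smul]
  rw [Xmono, ← Algebra.smul_def, ← Algebra.smul_def, smul_smul]
  have m1 : P2^l = (wvar:KK)^(c*l) • X2^(c*l) := by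
    rw [hP2smul, smul_pow, ← pow_mul, ← pow_mul]
  have m2 : X2^(c*l) * X1⁻¹^(b*p)
      = ((((wvar:KK)^(2:ℕ))⁻¹)^((b*p)*(c*l))) • (X1⁻¹^(b*p) * X2^(c*l)) :=
    comm_pow_pow _ X1⁻¹ X2 R3 (c*l) (b*p)
  have m3 : X1⁻¹^(b*p) * X2^(c*l) * X2⁻¹^n
      = X1^(-((b:ℤ)*p)) * X2^((-(n:ℤ)+(c:ℤ)*l)) := by
    rw [mul_assoc, inv_pow_zpow X1 (b*p), inv_pow_zpow X2 n, ← zpow_natCast X2 (c*l),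
      ← zpow_add₀ h2]
    have c1 : (-(↑(b*p):ℤ)) = -((b:ℤ)*p) := by push_cast; ring
    have c2 : ((↑(c*l):ℤ)) + -(n:ℤ) = -(n:ℤ)+(c:ℤ)*l := by push_cast; ring
    rw [c1, c2]
  rw [m1, smul_mul_assoc, smul_mul_assoc, m2, smul_mul_assoc, m3, smul_smul, smul_smul]
  congr 1
  push_cast
  have powid : ((wvar:KK)^b)^((p:ℤ)*((n:ℤ)-1)) * (wvar:KK)^(b*p)
        * ((wvar:KK)^c)^((l:ℤ)*((b:ℤ)*(p:ℤ)-1)) * ((wvar:KK)^(c*l)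
        * (((wvar:KK)^(2:ℕ))⁻¹)^((b*p)*(c*l)))
      = (wvar:KK)^((-((b:ℤ)*p))*((-(n:ℤ)+(c:ℤ)*l))) := by
    simp only [inv_pow, ← pow_mul, ← zpow_natCast, ← zpow_mul, ← zpow_neg,
      ← zpow_add₀ wvar_ne_zero]
    congr 1
    push_cast
    ring
  linear_combination (qbinom ((wvar:KK)^b) (n:ℤ) p * qbinom ((wvar:KK)^c) ((b:ℤ)*(p:ℤ)) l) * powid

end
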